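/- arXiv:0706.2049 — 6 statements merged into one kernel-verified Lean document; each statement's English description precedes it below -/
import Mathlib

section
/- For every nonnegative integer k, the coefficient of z^k in C(-z)^N equals (-1)^k * N/(k+N) * binom(2k+N-1, k), where C(z) is the Catalan generating function and N is a positive integer. -/
open PowerSeries Finset

private noncomputable def Cneg : PowerSeries ℚ :=
  PowerSeries.mk fun n => ((-1)^n * catalan n : ℚ)

private lemma Cneg_eq : Cneg = 1 - X * Cneg ^ 2 := by
  ext n
  cases n with
  | zero => simp [Cneg]
  | succ m =>
    rw [map_sub, coeff_succ_X_mul, sq, coeff_mul]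
    simp only [Cneg, coeff_mk, coeff_one, Nat.succ_ne_zero, if_false, zero_sub]
    have hsum : ∑ p ∈ antidiagonal m, ((-1:ℚ)^p.1 * catalan p.1) * ((-1)^p.2 * catalan p.2)
        = (-1)^m * ∑ p ∈ antidiagonal m, (catalan p.1 * catalan p.2 : ℚ) := by
      rw [Finset.mul_sum]
      refine Finset.sum_congr rfl fun p hp => ?_
      rw [Finset.HasAntidiagonal.mem_antidiagonal] at hp
      rw [← hp, pow_add]; ring
    rw [hsum, catalan_succ']
    push_cast
    ring

private lemma main_aux : ∀ k : ℕ, ∀ M : ℕ,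
    PowerSeries.coeff k (Cneg ^ (M + 1))
      = (-1)^k * ((M:ℚ) + 1)/(k + M + 1) * (Nat.choose (2*k + M) k : ℚ) := by
  intro k
  induction k using Nat.strong_induction_on with
  | _ k ih =>
    cases k with
    | zero =>
      intro M
      have h0 : constantCoeff Cneg = 1 := by simp [Cneg]
      have hM : ((M:ℚ) + 1) ≠ 0 := by positivity
      simp [coeff_zero_eq_constantCoeff, map_pow, h0, div_self hM]
    | succ k =>
      intro M
      induction M with
      | zero =>
        simp only [pow_one, Cneg, coeff_mk]
        rw [zero_add, pow_one, coeff_mk]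
        have hc : ((k:ℚ) + 1 + 1) * catalan (k+1) = Nat.choose (2*(k+1)) (k+1) := by
          exact_mod_cast congrArg (Nat.cast : ℕ → ℚ) (succ_mul_catalan_eq_centralBinom (k+1))
        have hk : ((k:ℚ) + 1 + 1) ≠ 0 := by positivity
        push_cast at hc ⊢
        field_simp
        linear_combination hc
      | succ M ihM =>
        have hrel : Cneg ^ (M + 2) = Cneg ^ (M + 1) - X * Cneg ^ (M + 3) := by
          calc Cneg ^ (M + 2) = Cneg ^ (M + 1) * Cneg := by ring
          _ = Cneg ^ (M + 1) * (1 - X * Cneg ^ 2) := by rw [← Cneg_eq]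
          _ = Cneg ^ (M + 1) - X * Cneg ^ (M + 3) := by ring
        rw [hrel, map_sub, coeff_succ_X_mul, ihM, ih k (Nat.lt_succ_self k) (M + 2)]
        have pascal : (Nat.choose (2*(k+1) + (M+1)) (k+1) : ℚ)
            = Nat.choose (2*k + M + 2) k + Nat.choose (2*k + M + 2) (k+1) := by
          have h2 : 2*(k+1) + (M+1) = (2*k + M + 2) + 1 := by ring
          rw [h2, Nat.choose_succ_succ']
          push_cast; ring
        have hfact : (Nat.choose (2*k + M + 2) (k+1) : ℚ) * ((k:ℚ)+1)
            = (Nat.choose (2*k + M + 2) k : ℚ) * ((k:ℚ) + M + 2) := by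
          have h := Nat.choose_succ_right_eq (2*k + M + 2) k
          have h2 : 2*k + M + 2 - k = k + M + 2 := by omega
          rw [h2] at h
          exact_mod_cast congrArg (Nat.cast : ℕ → ℚ) h
        have e1 : 2*(k+1) + M = 2*k + M + 2 := by ring
        have e2 : 2*k + (M+2) = 2*k + M + 2 := by ring
        rw [e1, e2, pascal]
        have d1 : ((k:ℚ) + 1 + M + 1) ≠ 0 := by positivity
        have d3 : ((k:ℚ) + (M + 2) + 1) ≠ 0 := by positivity
        push_cast at d1 d3 ⊢
        field_simp
        linear_combination ((-1:ℚ)^k * ((k:ℚ)+M+3)) * hfact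

/-- For every nonnegative integer `k` and positive integer `N`, the coefficient of
`z^k` in `C(-z)^N` equals `(-1)^k * N/(k+N) * binom(2k+N-1, k)`, where
`C(z) = ∑ catalan n * z^n` is the Catalan generating function, so that
`C(-z) = ∑ (-1)^n * catalan n * z^n`. -/
theorem coeff_catalan_neg_pow (N : ℕ) (hN : 1 ≤ N) (k : ℕ) :
    PowerSeries.coeff k ((PowerSeries.mk fun n => ((-1)^n * catalan n : ℚ))^N)
      = (-1)^k * (N : ℚ)/(k + N) * (Nat.choose (2*k + N - 1) k : ℚ) := by
  obtain ⟨M, rfl⟩ := Nat.exists_eq_add_of_le hN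
  rw [show 1 + M = M + 1 from by ring, show 2*k + (M+1) - 1 = 2*k + M from by omega]
  rw [show ((PowerSeries.mk fun n => ((-1)^n * catalan n : ℚ))) = Cneg from rfl]
  rw [main_aux k M]
  push_cast
  ring
end

section
/- The formal power series identity exp(sum_{n>0} ((-1)^{n-1}/n) * [binom(2n-1,n-1)*m + (4^{n-1} - binom(2n-1,n-1))*(2g-2)] * z^n) = (2/((1+4z)^{1/2}+1))^{2g-2-m} * (1+4z)^{(g-1)/2} holds in Q[[z]], for fixed integers g and m. -/
open PowerSeries

/-- The generalized binomial coefficient `binom(x, k) = x(x-1)⋯(x-k+1)/k!`. -/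
noncomputable def genChoose (x : ℚ) (k : ℕ) : ℚ :=
  (∏ j ∈ Finset.range k, (x - j)) / (Nat.factorial k : ℚ)

/-- The formal binomial series `(1+4z)^x = ∑_k binom(x,k) (4z)^k`. -/
noncomputable def onePlusFourZPow (x : ℚ) : PowerSeries ℚ :=
  PowerSeries.mk fun k => genChoose x k * 4 ^ k

/-- Integer powers (possibly negative) of a formal power series with invertible
constant term, via the formal inverse. -/
noncomputable def zpowPS (f : PowerSeries ℚ) (n : ℤ) : PowerSeries ℚ :=
  if 0 ≤ n then f ^ n.toNat else f⁻¹ ^ (-n).toNat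

/-- The formal exponential `exp F = ∑_k F^k/k!` of a power series `F` with zero
constant term (the coefficient of `z^n` only involves `F^k` for `k ≤ n`). -/
noncomputable def expPS (F : PowerSeries ℚ) : PowerSeries ℚ :=
  PowerSeries.mk fun n => ∑ k ∈ Finset.range (n+1),
    PowerSeries.coeff (R := ℚ) n (F ^ k) / (Nat.factorial k : ℚ)

namespace NdAux

open Finset

/-! ### Uniqueness of solutions of first-order linear ODEs in `ℚ⟦X⟧` -/

lemma uniq (B C U : ℚ⟦X⟧) (hB : constantCoeff (R := ℚ) B ≠ 0)
    (hU : B * d⁄dX ℚ U = C * U) (h0 : constantCoeff (R := ℚ) U = 0) : U = 0 := by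
  have key : ∀ n, coeff (R := ℚ) n U = 0 := by
    intro n
    induction n using Nat.strong_induction_on with
    | _ n ih =>
      match n with
      | 0 => simpa [coeff_zero_eq_constantCoeff] using h0
      | Nat.succ n =>
        have h := congrArg (coeff (R := ℚ) n) hU
        rw [coeff_mul, coeff_mul] at h
        have hrhs : ∑ p ∈ antidiagonal n, coeff (R := ℚ) p.1 C * coeff (R := ℚ) p.2 U = 0 := by
          apply Finset.sum_eq_zero
          intro p hp
          have : p.2 ≤ n := Finset.HasAntidiagonal.antidiagonal.snd_le hp
          rw [ih p.2 (Nat.lt_succ_of_le this), mul_zero]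
        have hlhs : ∑ p ∈ antidiagonal n, coeff (R := ℚ) p.1 B * coeff (R := ℚ) p.2 (d⁄dX ℚ U)
            = coeff (R := ℚ) 0 B * (coeff (R := ℚ) (n+1) U * (n+1)) := by
          rw [← PowerSeries.coeff_derivative]
          apply Finset.sum_eq_single (0, n)
          · intro p hp hne
            have hsum : p.1 + p.2 = n := Finset.HasAntidiagonal.mem_antidiagonal.mp hp
            have h2 : p.2 < n := by
              rcases Nat.lt_or_ge p.2 n with h' | h'
              · exact h'
              · exfalso; apply hne
                have : p.2 = n := le_antisymm (by omega) h'
                have : p.1 = 0 := by omega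
                exact Prod.ext this ‹p.2 = n›
            rw [PowerSeries.coeff_derivative, ih (p.2+1) (by omega), zero_mul, mul_zero]
          · intro h; exact absurd (Finset.HasAntidiagonal.mem_antidiagonal.mpr (by simp)) h
        rw [hlhs, hrhs] at h
        have hB0 : coeff (R := ℚ) 0 B ≠ 0 := by rwa [coeff_zero_eq_constantCoeff]
        have : coeff (R := ℚ) (n+1) U * ((n:ℚ)+1) = 0 :=
          (mul_eq_zero.mp h).resolve_left hB0
        have hn1 : ((n:ℚ)+1) ≠ 0 := by positivity
        exact (mul_eq_zero.mp this).resolve_right hn1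
  ext n
  simp [key n]

lemma uniq' (B C F G : ℚ⟦X⟧) (hB : constantCoeff (R := ℚ) B ≠ 0)
    (hF : B * d⁄dX ℚ F = C * F) (hG : B * d⁄dX ℚ G = C * G)
    (h0 : constantCoeff (R := ℚ) F = constantCoeff (R := ℚ) G) : F = G := by
  have := uniq B C (F - G) hB (by rw [map_sub, mul_sub, mul_sub, hF, hG]) (by simp [h0])
  exact sub_eq_zero.mp this

/-! ### Basics on `genChoose` and `onePlusFourZPow` -/

noncomputable def Bq : ℚ⟦X⟧ := 1 + C (R := ℚ) 4 * X

lemma C_eq_two : (C (R := ℚ) 2 : ℚ⟦X⟧) = 2 := by simp [← map_ofNat (C (R := ℚ)) 2]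
lemma C_eq_four : (C (R := ℚ) 4 : ℚ⟦X⟧) = 4 := by simp [← map_ofNat (C (R := ℚ)) 4]

lemma Bq_eq : Bq = 1 + 4*X := by rw [Bq, C_eq_four]

lemma coeff_Bq (n : ℕ) : coeff (R := ℚ) n Bq = if n = 0 then 1 else if n = 1 then 4 else 0 := by
  rw [Bq, map_add, coeff_one, coeff_C_mul, coeff_X]
  rcases n with _|_|n <;> simp

lemma constCoeff_Bq : constantCoeff (R := ℚ) Bq = 1 := by
  rw [← coeff_zero_eq_constantCoeff_apply, coeff_Bq]; simp

lemma genChoose_zero (x : ℚ) : genChoose x 0 = 1 := by simp [genChoose]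

lemma genChoose_succ (x : ℚ) (k : ℕ) :
    ((k:ℚ)+1) * genChoose x (k+1) = (x - k) * genChoose x k := by
  have hk : (k.factorial : ℚ) ≠ 0 := by exact_mod_cast k.factorial_pos.ne'
  simp only [genChoose, Finset.prod_range_succ, Nat.factorial_succ]
  push_cast
  field_simp

/-- generic builder for the ODE `Bq * f' = C c * f` from a coefficient recursion. -/
lemma ode_of_coeff (f : ℚ⟦X⟧) (c : ℚ)
    (h : ∀ n : ℕ, ((n:ℚ)+1) * coeff (R := ℚ) (n+1) f + 4*n*coeff (R := ℚ) n f = c * coeff (R := ℚ) n f) :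
    Bq * d⁄dX ℚ f = C (R := ℚ) c * f := by
  have hmul : Bq * d⁄dX ℚ f = d⁄dX ℚ f + C (R := ℚ) 4 * (X * d⁄dX ℚ f) := by rw [Bq]; ring
  ext n
  rw [hmul, map_add, coeff_C_mul, coeff_C_mul]
  rcases n with _|n
  · have h0 := h 0
    have hX : coeff (R := ℚ) 0 (X * d⁄dX ℚ f) = 0 := by
      rw [coeff_zero_eq_constantCoeff_apply, map_mul, constantCoeff_X, zero_mul]
    rw [hX, PowerSeries.coeff_derivative]
    norm_num at h0 ⊢
    linarith
  · rw [PowerSeries.coeff_derivative, coeff_succ_X_mul, PowerSeries.coeff_derivative]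
    have := h (n+1)
    push_cast at this ⊢
    linarith [this]

lemma coeff_P (x : ℚ) (n : ℕ) : coeff (R := ℚ) n (onePlusFourZPow x) = genChoose x n * 4^n := by
  simp [onePlusFourZPow]

lemma constCoeff_P (x : ℚ) : constantCoeff (R := ℚ) (onePlusFourZPow x) = 1 := by
  rw [← coeff_zero_eq_constantCoeff_apply, coeff_P, genChoose_zero]; norm_num

lemma odeP (x : ℚ) : Bq * d⁄dX ℚ (onePlusFourZPow x) = C (R := ℚ) (4*x) * onePlusFourZPow x := by
  apply ode_of_coeff
  intro n
  rw [coeff_P, coeff_P]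
  have := genChoose_succ x n
  have h4 : (4:ℚ)^(n+1) = 4 * 4^n := by ring
  calc ((n:ℚ)+1) * (genChoose x (n+1) * 4^(n+1)) + 4*n*(genChoose x n * 4^n)
      = ((x - n) * genChoose x n) * 4^(n+1) + 4*n*(genChoose x n * 4^n) := by
        rw [← this]; ring
    _ = 4*x * (genChoose x n * 4^n) := by rw [h4]; ring

lemma P_zero : onePlusFourZPow 0 = 1 := by
  ext n
  rw [coeff_P, coeff_one]
  rcases n with _|n
  · simp [genChoose_zero]
  · have : genChoose 0 (n+1) = 0 := by
      simp only [genChoose]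
      rw [Finset.prod_eq_zero (Finset.mem_range.mpr (Nat.succ_pos n))]
      · simp
      · simp
    simp [this]

lemma P_one : onePlusFourZPow 1 = Bq := by
  ext n
  rw [coeff_P, coeff_Bq]
  rcases n with _|_|n
  · simp [genChoose_zero]
  · simp [genChoose]
  · have : genChoose 1 (n+2) = 0 := by
      simp only [genChoose]
      rw [Finset.prod_eq_zero (i := 1) (Finset.mem_range.mpr (by omega))]
      · simp
      · simp
    simp [this]

lemma dmul (f g : ℚ⟦X⟧) : d⁄dX ℚ (f*g) = f * d⁄dX ℚ g + g * d⁄dX ℚ f := by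
  simpa [smul_eq_mul] using Derivation.leibniz (d⁄dX ℚ) f g

lemma P_mul (x y : ℚ) :
    onePlusFourZPow x * onePlusFourZPow y = onePlusFourZPow (x+y) := by
  apply uniq' Bq (C (R := ℚ) (4*x + 4*y)) _ _ (constCoeff_Bq.trans_ne one_ne_zero)
  · have hx := odeP x
    have hy := odeP y
    rw [dmul]
    have hC : C (R := ℚ) (4*x+4*y) = C (R := ℚ) (4*x) + C (R := ℚ) (4*y) := by rw [← map_add]
    rw [hC]
    linear_combination onePlusFourZPow y * hx + onePlusFourZPow x * hy
  · rw [odeP (x+y)]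
    congr 2
    ring
  · rw [map_mul, constCoeff_P, constCoeff_P, constCoeff_P, one_mul]

/-! ### The square root series and the central-binomial series -/

noncomputable def Gs : ℚ⟦X⟧ := PowerSeries.mk fun n => (-1)^n * ((2*n).choose n : ℚ)

lemma odeG : Bq * d⁄dX ℚ Gs = C (R := ℚ) (-2) * Gs := by
  apply ode_of_coeff
  intro n
  have key := Nat.succ_mul_centralBinom_succ n
  simp only [Nat.centralBinom] at key
  have keyq : ((n:ℚ)+1) * ((2*(n+1)).choose (n+1) : ℚ)
      = 2*(2*(n:ℚ)+1) * ((2*n).choose n : ℚ) := by exact_mod_cast key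
  simp only [Gs, coeff_mk]
  linear_combination (-1:ℚ)^n * (-1) * keyq

lemma G_eq : Gs = onePlusFourZPow (-(1/2)) := by
  apply uniq' Bq (C (R := ℚ) (-2)) _ _ (constCoeff_Bq.trans_ne one_ne_zero)
  · exact odeG
  · have h := odeP (-(1/2))
    have : (4 : ℚ) * (-(1/2)) = -2 := by norm_num
    rw [this] at h
    exact h
  · rw [constCoeff_P]
    simp [Gs, ← coeff_zero_eq_constantCoeff_apply]

lemma s_mul_si : onePlusFourZPow (1/2) * onePlusFourZPow (-(1/2)) = 1 := by
  rw [P_mul]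
  norm_num [P_zero]

lemma const_s : constantCoeff (R := ℚ) (onePlusFourZPow (1/2)) = 1 := constCoeff_P _

lemma s_sq : onePlusFourZPow (1/2) * onePlusFourZPow (1/2) = 1 + 4*X := by
  rw [P_mul, ← Bq_eq]
  norm_num [P_one]

lemma s_ne : (onePlusFourZPow (1/2)) ≠ 0 := by
  intro h
  have := const_s
  rw [h] at this
  simp at this

lemma s_ds : onePlusFourZPow (1/2) * d⁄dX ℚ (onePlusFourZPow (1/2)) = 2 := by
  have h := odeP (1/2)
  rw [Bq_eq] at h
  rw [show (1 + 4*X : ℚ⟦X⟧) = _ from s_sq.symm] at h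
  norm_num [C_eq_two] at h
  have h2 : onePlusFourZPow (1/2) * (onePlusFourZPow (1/2) * d⁄dX ℚ (onePlusFourZPow (1/2)))
      = onePlusFourZPow (1/2) * 2 := by
    rw [← mul_assoc, h]
    ring
  exact mul_left_cancel₀ s_ne h2

lemma s_Gs : onePlusFourZPow (1/2) * Gs = 1 := by
  rw [G_eq]; exact s_mul_si

/-! ### The exponential -/

lemma coeff_pow_eq_zero {F : ℚ⟦X⟧} (hF : constantCoeff (R := ℚ) F = 0) {j k : ℕ} (h : j < k) :
    coeff (R := ℚ) j (F^k) = 0 := by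
  obtain ⟨G, hG⟩ := X_dvd_iff.mpr hF
  rw [hG, mul_pow, coeff_X_pow_mul', if_neg (Nat.not_le.mpr h)]

lemma constCoeff_expPS (F : ℚ⟦X⟧) : constantCoeff (R := ℚ) (expPS F) = 1 := by
  rw [← coeff_zero_eq_constantCoeff_apply]
  simp [expPS]

lemma expPS_deriv {F : ℚ⟦X⟧} (hF : constantCoeff (R := ℚ) F = 0) :
    d⁄dX ℚ (expPS F) = d⁄dX ℚ F * expPS F := by
  ext n
  have step1 : coeff (R := ℚ) n (d⁄dX ℚ F * expPS F)
      = ∑ k ∈ range (n+1), coeff (R := ℚ) n (d⁄dX ℚ F * F^k) / (k.factorial : ℚ) := by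
    rw [coeff_mul]
    have inner : ∀ p : ℕ × ℕ, p ∈ antidiagonal n →
        coeff (R := ℚ) p.1 (d⁄dX ℚ F) * coeff (R := ℚ) p.2 (expPS F)
        = ∑ k ∈ range (n+1),
            coeff (R := ℚ) p.1 (d⁄dX ℚ F) * coeff (R := ℚ) p.2 (F^k) / (k.factorial : ℚ) := by
      intro p hp
      have hple : p.2 ≤ n := Finset.HasAntidiagonal.antidiagonal.snd_le hp
      rw [expPS, coeff_mk, Finset.mul_sum]
      rw [← Finset.sum_subset (Finset.range_subset_range.mpr (by omega : p.2+1 ≤ n+1))]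
      · apply Finset.sum_congr rfl
        intro k _
        ring
      · intro k hk hknot
        have : p.2 < k := by simp at hk hknot; omega
        rw [coeff_pow_eq_zero hF this]
        simp
    rw [Finset.sum_congr rfl inner, Finset.sum_comm]
    apply Finset.sum_congr rfl
    intro k _
    rw [coeff_mul, Finset.sum_div]
  rw [step1, PowerSeries.coeff_derivative, expPS, coeff_mk]
  rw [Finset.sum_range_succ' (fun k => coeff (R := ℚ) (n+1) (F^k) / (k.factorial : ℚ)) (n+1)]
  have hzero : coeff (R := ℚ) (n+1) (F^0) / (Nat.factorial 0 : ℚ) = 0 := by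
    simp
  rw [hzero, add_zero, Finset.sum_mul]
  apply Finset.sum_congr rfl
  intro k _
  have hd : d⁄dX ℚ (F^(k+1)) = (k+1 : ℚ⟦X⟧) * (F^k * d⁄dX ℚ F) := by
    have := Derivation.leibniz_pow (d⁄dX ℚ) F (k+1)
    simp only [nsmul_eq_mul, Nat.add_sub_cancel, smul_eq_mul] at this
    rw [this]
    push_cast
    ring
  have hcoeff : coeff (R := ℚ) (n+1) (F^(k+1)) * ((n:ℚ)+1)
      = ((k:ℚ)+1) * coeff (R := ℚ) n (F^k * d⁄dX ℚ F) := by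
    have h1 := PowerSeries.coeff_derivative (F^(k+1)) n
    rw [hd] at h1
    have h2 : coeff (R := ℚ) n ((k+1 : ℚ⟦X⟧) * (F^k * d⁄dX ℚ F))
        = ((k:ℚ)+1) * coeff (R := ℚ) n (F^k * d⁄dX ℚ F) := by
      have : ((k:ℚ⟦X⟧)+1) = C (R := ℚ) ((k:ℚ)+1) := by
        push_cast
        simp
      rw [this, coeff_C_mul]
    rw [h2] at h1
    linarith
  have hfac : ((k+1).factorial : ℚ) = ((k:ℚ)+1) * (k.factorial : ℚ) := by
    rw [Nat.factorial_succ]; push_cast; ring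
  rw [hfac]
  have hkfac : (k.factorial : ℚ) ≠ 0 := by exact_mod_cast k.factorial_pos.ne'
  have hk1 : ((k:ℚ)+1) ≠ 0 := by positivity
  rw [mul_comm (F^k) (d⁄dX ℚ F)] at hcoeff
  field_simp
  linear_combination hcoeff

/-! ### ODEs for powers and inverses -/

lemma ode_pow {B Cs f : ℚ⟦X⟧} (h : B * d⁄dX ℚ f = Cs * f) (n : ℕ) :
    B * d⁄dX ℚ (f^n) = C (R := ℚ) (n:ℚ) * Cs * f^n := by
  induction n with
  | zero => simp
  | succ n ih =>
    rw [pow_succ, dmul]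
    have hC : C (R := ℚ) ((n:ℚ)+1) = C (R := ℚ) (n:ℚ) + 1 := by rw [map_add, map_one]
    push_cast
    rw [hC]
    linear_combination f^n * h + f * ih

lemma ode_inv {B Cs f : ℚ⟦X⟧} (hf : constantCoeff (R := ℚ) f ≠ 0)
    (h : B * d⁄dX ℚ f = Cs * f) :
    B * d⁄dX ℚ f⁻¹ = -Cs * f⁻¹ := by
  have h1 : f * f⁻¹ = 1 := PowerSeries.mul_inv_cancel f hf
  have h2 : f * d⁄dX ℚ f⁻¹ + f⁻¹ * d⁄dX ℚ f = 0 := by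
    have := congrArg (d⁄dX ℚ) h1
    rw [dmul] at this
    simpa using this
  linear_combination (B * f⁻¹) * h2 - f⁻¹ * f⁻¹ * h
    - (B * d⁄dX ℚ f⁻¹ + Cs * f⁻¹) * h1

lemma ode_zpow {B Cs f : ℚ⟦X⟧} (hf : constantCoeff (R := ℚ) f ≠ 0)
    (h : B * d⁄dX ℚ f = Cs * f) (k : ℤ) :
    B * d⁄dX ℚ (zpowPS f k) = C (R := ℚ) (k:ℚ) * Cs * zpowPS f k := by
  unfold zpowPS
  split_ifs with hk
  · rw [ode_pow h k.toNat]
    congr 2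
    congr 1
    exact_mod_cast congrArg (Int.cast : ℤ → ℚ) (Int.toNat_of_nonneg hk)
  · rw [ode_pow (ode_inv hf h) (-k).toNat]
    have : (((-k).toNat : ℚ)) = -(k:ℚ) := by
      have := Int.toNat_of_nonneg (by omega : (0:ℤ) ≤ -k)
      exact_mod_cast congrArg (Int.cast : ℤ → ℚ) this
    rw [this]
    rw [show C (R := ℚ) (-(k:ℚ)) * -Cs = C (R := ℚ) ((k:ℚ)) * Cs by rw [map_neg]; ring]

lemma const_zpow {f : ℚ⟦X⟧} (hf : constantCoeff (R := ℚ) f = 1) (k : ℤ) :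
    constantCoeff (R := ℚ) (zpowPS f k) = 1 := by
  unfold zpowPS
  split_ifs <;> rw [map_pow]
  · rw [hf, one_pow]
  · rw [PowerSeries.constantCoeff_inv, hf]; norm_num

/-! ### The two generating-function identities -/

noncomputable def Vm : ℚ⟦X⟧ := PowerSeries.mk fun n => (-1)^n * ((2*n+1).choose n : ℚ)
noncomputable def V4 : ℚ⟦X⟧ := PowerSeries.mk fun n => (-4)^n

lemma key2 : (1 + 4*X : ℚ⟦X⟧) * V4 = 1 := by
  have hmul : (1 + 4*X : ℚ⟦X⟧) * V4 = V4 + C (R := ℚ) 4 * (X * V4) := by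
    rw [C_eq_four]; ring
  ext n
  rw [hmul, map_add, coeff_C_mul, coeff_one]
  rcases n with _|n
  · have : coeff (R := ℚ) 0 (X * V4) = 0 := by
      rw [coeff_zero_eq_constantCoeff_apply, map_mul, constantCoeff_X, zero_mul]
    rw [this]
    simp [V4]
  · rw [coeff_succ_X_mul]
    simp only [V4, coeff_mk]
    rw [if_neg (Nat.succ_ne_zero n)]
    rw [pow_succ]
    ring

lemma twoXVm : (2*X : ℚ⟦X⟧) * Vm = 1 - Gs := by
  ext n
  have hmul : (2*X : ℚ⟦X⟧) * Vm = C (R := ℚ) 2 * (X * Vm) := by rw [C_eq_two]; ring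
  rw [hmul, coeff_C_mul, map_sub, coeff_one]
  rcases n with _|n
  · have : coeff (R := ℚ) 0 (X * Vm) = 0 := by
      rw [coeff_zero_eq_constantCoeff_apply, map_mul, constantCoeff_X, zero_mul]
    rw [this]
    simp [Gs]
  · rw [coeff_succ_X_mul]
    simp only [Vm, Gs, coeff_mk]
    rw [if_neg (Nat.succ_ne_zero n)]
    have hpascal : (2*(n+1)).choose (n+1) = 2 * ((2*n+1).choose n) := by
      have h1 : (2*(n+1)) = (2*n+1)+1 := by omega
      rw [h1, Nat.choose_succ_succ]
      have h2 := Nat.choose_symm (show n+1 ≤ 2*n+1 by omega)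
      have h3 : 2*n+1-(n+1) = n := by omega
      rw [h3] at h2
      simp only [Nat.succ_eq_add_one] at *
      omega
    have hq : ((2*(n+1)).choose (n+1) : ℚ) = 2 * ((2*n+1).choose n : ℚ) := by
      exact_mod_cast hpascal
    rw [hq, pow_succ]
    ring

lemma key1 : (1 + 4*X : ℚ⟦X⟧) * (onePlusFourZPow (1/2) + 1) * Vm
    = 2 * onePlusFourZPow (1/2) := by
  set s := onePlusFourZPow (1/2) with hs
  have h2X : (2*X : ℚ⟦X⟧) ≠ 0 := by
    intro h
    have : (X : ℚ⟦X⟧) = 0 := by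
      have h2 : (2:ℚ⟦X⟧) ≠ 0 := by
        rw [← C_eq_two]
        intro h2
        have := congrArg (constantCoeff (R := ℚ)) h2
        simp at this
      exact (mul_eq_zero.mp h).resolve_left h2
    exact X_ne_zero this
  apply mul_left_cancel₀ h2X
  have hB := s_sq
  have hG := s_Gs
  have hXV := twoXVm
  linear_combination (s-(s+1)*(1-Gs))*hB - s*(s+1)*hG + (1+4*X)*(s+1)*hXV
end NdAux

open NdAux in
/-- The formal power series identity
`exp(∑_{n>0} ((-1)^{n-1}/n)[binom(2n-1,n-1)m + (4^{n-1} - binom(2n-1,n-1))(2g-2)] z^n)`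
`= (2/((1+4z)^{1/2}+1))^{2g-2-m} * (1+4z)^{(g-1)/2}` in `ℚ[[z]]`. -/
theorem exp_log_Nd_generating_function (g m : ℤ) :
    expPS (PowerSeries.mk fun n : ℕ => if n = 0 then 0 else
        ((-1)^(n-1) / (n : ℚ)) *
          ((Nat.choose (2*n - 1) (n - 1) : ℚ) * m
            + ((4:ℚ)^(n-1) - (Nat.choose (2*n - 1) (n - 1) : ℚ)) * (2*(g:ℚ) - 2)))
      = zpowPS (2 * ((onePlusFourZPow (1/2) + 1)⁻¹)) (2*g - 2 - m)
          * onePlusFourZPow (((g : ℚ) - 1)/2) := by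
  set s := onePlusFourZPow (1/2) with hs
  set t := onePlusFourZPow (((g:ℚ)-1)/2) with ht
  set A : ℚ⟦X⟧ := PowerSeries.mk fun n : ℕ => if n = 0 then 0 else
      ((-1)^(n-1) / (n : ℚ)) *
        ((Nat.choose (2*n - 1) (n - 1) : ℚ) * m
          + ((4:ℚ)^(n-1) - (Nat.choose (2*n - 1) (n - 1) : ℚ)) * (2*(g:ℚ) - 2)) with hA
  set Z := zpowPS (2 * ((s + 1)⁻¹)) (2*g-2-m) with hZdef
  have hsq : s * s = 1 + 4*X := by rw [hs]; exact s_sq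
  have hsds : s * d⁄dX ℚ s = 2 := by rw [hs]; exact s_ds
  have hconst_s1 : constantCoeff (R := ℚ) (s+1) = 2 := by
    rw [map_add, hs, const_s, map_one]; norm_num
  have hA0 : constantCoeff (R := ℚ) A = 0 := by
    rw [hA, ← coeff_zero_eq_constantCoeff_apply, coeff_mk]; simp
  -- closed form for A'
  have dA_eq : d⁄dX ℚ A = C (R := ℚ) (m:ℚ) * Vm + C (R := ℚ) (2*(g:ℚ)-2) * (V4 - Vm) := by
    ext n
    rw [PowerSeries.coeff_derivative, hA, coeff_mk]
    rw [if_neg (Nat.succ_ne_zero n)]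
    have e1 : 2*(n+1) - 1 = 2*n+1 := by omega
    have e2 : (n+1) - 1 = n := by omega
    rw [e1, e2]
    rw [map_add, coeff_C_mul, coeff_C_mul, map_sub]
    simp only [Vm, V4, coeff_mk]
    have hn : ((n:ℚ)+1) ≠ 0 := by positivity
    have h4 : ((-4:ℚ))^n = (-1)^n * 4^n := by rw [← neg_one_mul, mul_pow]
    rw [h4]
    push_cast
    field_simp
  have hDA : (1 + 4*X : ℚ⟦X⟧) * (s+1) * d⁄dX ℚ A
      = C (R := ℚ) (2*(g:ℚ)-2) + C (R := ℚ) (2*(m:ℚ)-2*(g:ℚ)+2) * s := by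
    rw [dA_eq]
    have hCC : C (R := ℚ) (2*(m:ℚ)-2*(g:ℚ)+2) = 2 * C (R := ℚ) (m:ℚ) - C (R := ℚ) (2*(g:ℚ)-2) := by
      rw [show (2*(m:ℚ)-2*(g:ℚ)+2) = 2*(m:ℚ) - (2*(g:ℚ)-2) by ring, map_sub, map_mul,
        C_eq_two]
    rw [hCC]
    have k1 : (1 + 4*X : ℚ⟦X⟧) * (s + 1) * Vm = 2 * s := by rw [hs]; exact key1
    linear_combination (C (R := ℚ) (m:ℚ) - C (R := ℚ) (2*(g:ℚ)-2)) * k1 + C (R := ℚ) (2*(g:ℚ)-2)*(s+1)*key2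
  -- the LHS satisfies the ODE
  have hE : (1+4*X : ℚ⟦X⟧) * (s+1) * d⁄dX ℚ (expPS A)
      = (C (R := ℚ) (2*(g:ℚ)-2) + C (R := ℚ) (2*(m:ℚ)-2*(g:ℚ)+2) * s) * expPS A := by
    rw [expPS_deriv hA0, ← hDA]
    ring
  -- the RHS satisfies the ODE
  have hQconst : constantCoeff (R := ℚ) (2 * (s+1)⁻¹) = 1 := by
    rw [map_mul, PowerSeries.constantCoeff_inv, hconst_s1, ← C_eq_two, constantCoeff_C]
    norm_num
  have hQi : (s+1) * (s+1)⁻¹ = 1 :=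
    PowerSeries.mul_inv_cancel _ (by rw [hconst_s1]; norm_num)
  have hdQi : (s+1) * d⁄dX ℚ ((s+1)⁻¹) + (s+1)⁻¹ * d⁄dX ℚ s = 0 := by
    have h := congrArg (d⁄dX ℚ) hQi
    rw [dmul] at h
    have hd1 : d⁄dX ℚ (s+1 : ℚ⟦X⟧) = d⁄dX ℚ s := by
      rw [map_add]; simp
    rw [hd1] at h
    simpa using h
  have hQ : (s*(s+1)) * d⁄dX ℚ (2 * (s+1)⁻¹) = (-2 : ℚ⟦X⟧) * (2 * (s+1)⁻¹) := by
    have hd2 : d⁄dX ℚ (2 * (s+1)⁻¹ : ℚ⟦X⟧) = 2 * d⁄dX ℚ ((s+1)⁻¹) := by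
      rw [dmul, ← C_eq_two]
      simp
    rw [hd2]
    linear_combination 2*s*hdQi - 2*((s+1)⁻¹)*hsds
  have hZ : (s*(s+1)) * d⁄dX ℚ Z
      = C (R := ℚ) (((2*g-2-m : ℤ):ℚ)) * (-2 : ℚ⟦X⟧) * Z := by
    rw [hZdef]
    exact ode_zpow (by rw [hQconst]; norm_num) hQ (2*g-2-m)
  have hCN : C (R := ℚ) (((2*g-2-m : ℤ):ℚ)) * (-2 : ℚ⟦X⟧)
      = C (R := ℚ) (2*(m:ℚ)-2*(g:ℚ)+2) - C (R := ℚ) (2*(g:ℚ)-2) := by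
    rw [show (-2:ℚ⟦X⟧) = C (R := ℚ) (-2) by rw [map_neg, C_eq_two], ← map_mul, ← map_sub]
    congr 1
    push_cast
    ring
  have ht' : (1+4*X : ℚ⟦X⟧) * d⁄dX ℚ t = C (R := ℚ) (2*(g:ℚ)-2) * t := by
    have h := odeP (((g:ℚ)-1)/2)
    rw [Bq_eq, show (4:ℚ)*(((g:ℚ)-1)/2) = 2*(g:ℚ)-2 by ring, ← ht] at h
    exact h
  have hR : (1+4*X : ℚ⟦X⟧) * (s+1) * d⁄dX ℚ (Z * t)
      = (C (R := ℚ) (2*(g:ℚ)-2) + C (R := ℚ) (2*(m:ℚ)-2*(g:ℚ)+2) * s) * (Z*t) := by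
    rw [dmul]
    linear_combination (s+1)*Z*ht' + s*t*hZ - (s+1)*t*(d⁄dX ℚ Z)*hsq + s*Z*t*hCN
  -- conclude by uniqueness
  apply uniq' ((1+4*X : ℚ⟦X⟧)*(s+1)) (C (R := ℚ) (2*(g:ℚ)-2) + C (R := ℚ) (2*(m:ℚ)-2*(g:ℚ)+2) * s)
  · rw [map_mul, hconst_s1, map_add, map_one, map_mul, constantCoeff_X]
    norm_num
  · exact hE
  · exact hR
  · rw [constCoeff_expPS, map_mul, ht, constCoeff_P, hZdef, const_zpow hQconst, one_mul]
end

section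
/- For n >= 1 and a_1 = ... = a_n = a, the determinant Delta(a,...,a) of the n x n matrix with (i,j)-entry 1/(a+j-i)! equals (n-1)! (n-2)! ... 1! * 0! / ((a+n-1)! (a+n-2)! ... a!); more generally, Delta(a_1,...,a_n) = prod_{j>i} (a_i - a_j - i + j) / prod_{i=1}^n (a_i - i + n - 1)!. -/
open Finset

private lemma prod_pairs_lt {M : Type*} [CommMonoid M] {n : ℕ} (f : Fin n → Fin n → M) :
    ∏ p ∈ Finset.univ.filter (fun p : Fin n × Fin n => p.1 < p.2), f p.1 p.2
      = ∏ i : Fin n, ∏ j ∈ Finset.Ioi i, f i j := by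
  rw [Finset.prod_sigma']
  refine Finset.prod_nbij' (fun p => ⟨p.1, p.2⟩) (fun x => (x.1, x.2)) ?_ ?_ ?_ ?_ ?_ <;>
    simp [Finset.mem_Ioi]

private lemma prod_pairs_rev {M : Type*} [CommMonoid M] {n : ℕ} (f : Fin n → Fin n → M) :
    ∏ p ∈ Finset.univ.filter (fun p : Fin n × Fin n => p.1 < p.2), f p.1 p.2
      = ∏ p ∈ Finset.univ.filter (fun p : Fin n × Fin n => p.1 < p.2), f p.2.rev p.1.rev := by
  refine Finset.prod_nbij' (fun p => (p.2.rev, p.1.rev)) (fun p => (p.2.rev, p.1.rev))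
    ?_ ?_ ?_ ?_ ?_ <;> simp [Fin.rev_lt_rev]

/-- For integers `a₁, …, aₙ`, `Δ(a₁,…,aₙ)` is the determinant of the `n × n`
matrix with `(i,j)`-entry `1/(aᵢ+j-i)!` (with the convention `1/k! = 0` for `k < 0`):
`Δ(a₁,…,aₙ) = ∏_{j>i} (aᵢ - aⱼ - i + j) / ∏ᵢ (aᵢ - i + n - 1)!`.
In particular, for `a₁ = ⋯ = aₙ = a ≥ 0` this gives
`Δ(a,…,a) = (n-1)!⋯1!·0! / ((a+n-1)!⋯a!)`. -/
theorem delta_determinant_formula (n : ℕ) (hn : 1 ≤ n) :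
    (∀ a : Fin n → ℤ, (∀ i : Fin n, 0 ≤ a i - (i : ℤ) + n - 1) →
      Matrix.det (Matrix.of fun i j : Fin n =>
          if 0 ≤ a i + (j : ℤ) - (i : ℤ) then
            (1 : ℚ) / (Nat.factorial (a i + (j : ℤ) - (i : ℤ)).toNat : ℚ)
          else 0)
        = (∏ p ∈ Finset.univ.filter (fun p : Fin n × Fin n => p.1 < p.2),
              ((a p.1 - a p.2 - (p.1 : ℤ) + (p.2 : ℤ) : ℤ) : ℚ))
            / ∏ i : Fin n, (Nat.factorial (a i - (i : ℤ) + n - 1).toNat : ℚ))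
    ∧ (∀ a : ℤ, 0 ≤ a →
      Matrix.det (Matrix.of fun i j : Fin n =>
          if 0 ≤ a + (j : ℤ) - (i : ℤ) then
            (1 : ℚ) / (Nat.factorial (a + (j : ℤ) - (i : ℤ)).toNat : ℚ)
          else 0)
        = (∏ i ∈ Finset.range n, (Nat.factorial i : ℚ))
            / ∏ i ∈ Finset.range n, (Nat.factorial (a + (i : ℤ)).toNat : ℚ)) := by
  have main : ∀ a : Fin n → ℤ, (∀ i : Fin n, 0 ≤ a i - (i : ℤ) + n - 1) →
      Matrix.det (Matrix.of fun i j : Fin n =>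
          if 0 ≤ a i + (j : ℤ) - (i : ℤ) then
            (1 : ℚ) / (Nat.factorial (a i + (j : ℤ) - (i : ℤ)).toNat : ℚ)
          else 0)
        = (∏ p ∈ Finset.univ.filter (fun p : Fin n × Fin n => p.1 < p.2),
              ((a p.1 - a p.2 - (p.1 : ℤ) + (p.2 : ℤ) : ℤ) : ℚ))
            / ∏ i : Fin n, (Nat.factorial (a i - (i : ℤ) + n - 1).toNat : ℚ) := by
    intro a ha
    set m : Fin n → ℕ := fun i => (a i - (i : ℤ) + n - 1).toNat with hm_def
    have hm : ∀ i, (m i : ℤ) = a i - (i : ℤ) + n - 1 := fun i => Int.toNat_of_nonneg (ha i)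
    -- Step A: rewrite the matrix
    have hA : (Matrix.of fun i j : Fin n =>
          if 0 ≤ a i + (j : ℤ) - (i : ℤ) then
            (1 : ℚ) / (Nat.factorial (a i + (j : ℤ) - (i : ℤ)).toNat : ℚ)
          else 0)
        = Matrix.of (fun i j : Fin n =>
            ((1 : ℚ) / (Nat.factorial (m i) : ℚ)) *
              ((m i).descFactorial (n - 1 - (j : ℕ)) : ℚ)) := by
      ext i j
      have hj : ((n - 1 - (j : ℕ) : ℕ) : ℤ) = (n : ℤ) - 1 - (j : ℕ) := by
        have := j.isLt; omega
      have key : a i + (j : ℤ) - (i : ℤ) = (m i : ℤ) - (n - 1 - (j : ℕ) : ℕ) := by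
        rw [hm, hj]; ring
      by_cases h : 0 ≤ a i + (j : ℤ) - (i : ℤ)
      · have hle : (n - 1 - (j : ℕ) : ℕ) ≤ m i := by omega
        have htn : (a i + (j : ℤ) - (i : ℤ)).toNat = m i - (n - 1 - (j : ℕ)) := by omega
        have hfac := Nat.factorial_mul_descFactorial hle
        rw [Matrix.of_apply, Matrix.of_apply, if_pos h, htn]
        have h1 : ((m i - (n - 1 - (j : ℕ))).factorial : ℚ) ≠ 0 := by positivity
        have h2 : ((m i).factorial : ℚ) ≠ 0 := by positivity
        field_simp
        exact_mod_cast hfac.symm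
      · have hlt : m i < n - 1 - (j : ℕ) := by omega
        rw [Matrix.of_apply, Matrix.of_apply, if_neg h,
          Nat.descFactorial_eq_zero_iff_lt.mpr hlt]
        simp
    have hcol := Matrix.det_mul_column (fun i => (1 : ℚ) / (Nat.factorial (m i) : ℚ))
      (Matrix.of (fun i j : Fin n => ((m i).descFactorial (n - 1 - (j : ℕ)) : ℚ)))
    simp only [Matrix.of_apply] at hcol
    rw [hA, hcol]
    -- Step C: compute the determinant of the descFactorial matrix
    have hsub : (Matrix.of (fun i j : Fin n =>
            ((m i).descFactorial (n - 1 - (j : ℕ)) : ℚ)))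
        = (Matrix.of (fun i j : Fin n =>
            ((m (Fin.rev i)).descFactorial (j : ℕ) : ℚ))).submatrix Fin.revPerm Fin.revPerm := by
      ext i j
      have hrev : ((Fin.rev j : Fin n) : ℕ) = n - 1 - (j : ℕ) := by
        rw [Fin.val_rev]; omega
      simp only [Matrix.submatrix_apply, Matrix.of_apply, Equiv.coe_fn_mk, Fin.revPerm_apply,
        Fin.rev_rev, hrev]
    have hC : (Matrix.of (fun i j : Fin n =>
            ((m (Fin.rev i)).descFactorial (j : ℕ) : ℚ))).det
        = (Matrix.vandermonde (fun i : Fin n => (m (Fin.rev i) : ℚ))).det := by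
      rw [Matrix.det_eval_matrixOfPolynomials_eq_det_vandermonde
        (fun i : Fin n => (m (Fin.rev i) : ℚ)) (fun i => descPochhammer ℚ i)
        (fun i => descPochhammer_natDegree ℚ i) (fun i => monic_descPochhammer ℚ i)]
      congr 1
      ext i j
      rw [Matrix.of_apply, Matrix.of_apply, descPochhammer_eval_eq_descFactorial]
    have hdet : (Matrix.of (fun i j : Fin n =>
            ((m i).descFactorial (n - 1 - (j : ℕ)) : ℚ))).det
        = ∏ p ∈ Finset.univ.filter (fun p : Fin n × Fin n => p.1 < p.2),
            ((m p.1 : ℚ) - (m p.2 : ℚ)) := by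
      rw [hsub, Matrix.det_submatrix_equiv_self Fin.revPerm, hC, Matrix.det_vandermonde]
      rw [prod_pairs_rev (fun i j : Fin n => (m i : ℚ) - (m j : ℚ)),
        prod_pairs_lt (fun i j : Fin n => (m j.rev : ℚ) - (m i.rev : ℚ))]
    rw [hdet]
    have hnum : ∀ p : Fin n × Fin n,
        ((a p.1 - a p.2 - (p.1 : ℤ) + (p.2 : ℤ) : ℤ) : ℚ) = (m p.1 : ℚ) - (m p.2 : ℚ) := by
      intro p
      have hz : (a p.1 - a p.2 - (p.1 : ℤ) + (p.2 : ℤ)) = (m p.1 : ℤ) - (m p.2 : ℤ) := by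
        rw [hm, hm]; ring
      rw [hz]; push_cast; ring
    rw [Finset.prod_congr rfl (fun p _ => hnum p)]
    rw [show (∏ i : Fin n, ((1:ℚ) / ((Nat.factorial (m i) : ℕ) : ℚ)))
        = 1 / ∏ i : Fin n, ((Nat.factorial (m i) : ℕ) : ℚ) by
      rw [Finset.prod_div_distrib, Finset.prod_const_one]]
    ring
  refine ⟨main, ?_⟩
  intro a ha0
  have h := main (fun _ => a) (by
    intro i
    have h1 := i.isLt
    show 0 ≤ a - (i : ℤ) + n - 1
    omega)
  rw [h]
  congr 1
  · -- numerator
    obtain ⟨k, rfl⟩ : ∃ k, n = k + 1 := ⟨n - 1, by omega⟩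
    rw [prod_pairs_lt (fun i j : Fin (k+1) =>
      ((a - a - (i : ℤ) + (j : ℤ) : ℤ) : ℚ))]
    have hv := Matrix.det_vandermonde_id_eq_superFactorial (R := ℚ) k
    rw [Matrix.det_vandermonde] at hv
    have key : (∏ i : Fin (k+1), ∏ j ∈ Finset.Ioi i,
          ((a - a - (i : ℤ) + (j : ℤ) : ℤ) : ℚ))
        = ∏ i : Fin (k+1), ∏ j ∈ Finset.Ioi i, (((j : ℕ) : ℚ) - ((i : ℕ) : ℚ)) := by
      refine Finset.prod_congr rfl fun i _ => Finset.prod_congr rfl fun j _ => ?_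
      push_cast
      ring
    rw [key, hv, show ((Nat.superFactorial k : ℕ) : ℚ)
        = ∏ i ∈ Finset.range (k+1), ((Nat.factorial i : ℕ) : ℚ) by
      rw [← Nat.cast_prod, Nat.prod_range_succ_factorial]]
  · -- denominator
    rw [Fin.prod_univ_eq_prod_range
      (fun i => ((Nat.factorial (a - (i : ℤ) + n - 1).toNat : ℕ) : ℚ)) n]
    rw [← Finset.prod_range_reflect (fun i => ((Nat.factorial (a + (i : ℤ)).toNat : ℕ) : ℚ)) n]
    apply Finset.prod_congr rfl
    intro i hi
    rw [Finset.mem_range] at hi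
    congr 3
    omega
end

section
/- With P_c(a,d) and P_{alpha,2}(a,d) as defined by the explicit alternating sums, for d = 1 and any a >= 1: P_c(a,1) = -(a+2), P_{alpha,2}(a,1) = -a/2, and consequently a*P_c(a,1) - (4*1+2a)*P_{alpha,2}(a,1) = 0. -/
/-- `P_c(a,d)`: the coefficient
`-((2ad+1)!/((2ad-d+a)! d!)) ∑_{i=0}^{⌊(a-1)/2⌋} (-1)^i ((2a-2)d+a)!/((2a-2)d+2i+1)!`
`· d!/(d-i)! · (a-1)!/(a-1-2i)! · 1/i!`, where `d!/(d-i)!` is the falling factorial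
(zero when `i > d`). -/
noncomputable def Pc (a d : ℕ) : ℚ :=
  -((Nat.factorial (2*a*d + 1) : ℚ) / ((Nat.factorial (2*a*d - d + a) : ℚ) * (Nat.factorial d : ℚ)))
    * ∑ i ∈ Finset.range ((a-1)/2 + 1),
        (-1)^i * ((Nat.factorial ((2*a-2)*d + a) : ℚ) / (Nat.factorial ((2*a-2)*d + 2*i + 1) : ℚ))
          * (Nat.descFactorial d i : ℚ)
          * ((Nat.factorial (a-1) : ℚ) / (Nat.factorial (a-1-2*i) : ℚ))
          * (1 / (Nat.factorial i : ℚ))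

/-- `P_{α,2}(a,d)`: the coefficient
`-((2ad)!/(2(2ad-d+a)! d!)) ∑_{i=0}^{⌊a/2⌋} (-1)^i ((2a-2)d+a)!/((2a-2)d+2i)!`
`· d!/(d-i)! · a!/(a-2i)! · 1/i!`, where `d!/(d-i)!` is the falling factorial
(zero when `i > d`). -/
noncomputable def Palpha2 (a d : ℕ) : ℚ :=
  -((Nat.factorial (2*a*d) : ℚ) / (2 * (Nat.factorial (2*a*d - d + a) : ℚ) * (Nat.factorial d : ℚ)))
    * ∑ i ∈ Finset.range (a/2 + 1),
        (-1)^i * ((Nat.factorial ((2*a-2)*d + a) : ℚ) / (Nat.factorial ((2*a-2)*d + 2*i) : ℚ))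
          * (Nat.descFactorial d i : ℚ)
          * ((Nat.factorial a : ℚ) / (Nat.factorial (a-2*i) : ℚ))
          * (1 / (Nat.factorial i : ℚ))


lemma sum_two (f : ℕ → ℚ) (h : ∀ i, 2 ≤ i → f i = 0) (n : ℕ) (hn : 1 ≤ n) :
    ∑ i ∈ Finset.range (n+1), f i = f 0 + f 1 := by
  rw [← Finset.sum_subset (Finset.range_subset_range.mpr (show 2 ≤ n+1 by omega))
      (fun x _ hx => h x (by simp at hx; omega))]
  simp [Finset.sum_range_succ]

lemma fac_cast_ne (m : ℕ) : ((Nat.factorial m : ℕ) : ℚ) ≠ 0 :=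
  Nat.cast_ne_zero.mpr (Nat.factorial_ne_zero m)

lemma Pc_one (a : ℕ) (ha : 1 ≤ a) : Pc a 1 = -((a : ℚ) + 2) := by
  match a, ha with
  | 1, _ => norm_num [Pc, Nat.factorial, Finset.sum_range_succ, Nat.descFactorial]
  | 2, _ => norm_num [Pc, Nat.factorial, Finset.sum_range_succ, Nat.descFactorial]
  | (n+3), _ =>
  unfold Pc
  rw [sum_two _ (fun i hi => by
      simp [Nat.descFactorial_eq_zero_iff_lt.mpr (show 1 < i by omega)]) _
      (by omega : 1 ≤ (n+3-1)/2)]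
  have e1 : 2*(n+3)*1 + 1 = 2*n+7 := by ring
  have e2 : 2*(n+3)*1 - 1 + (n+3) = 3*n+8 := by omega
  have e3 : (2*(n+3)-2)*1 + (n+3) = 3*n+7 := by omega
  have e4 : (2*(n+3)-2)*1 + 2*0 + 1 = 2*n+5 := by omega
  have e5 : (2*(n+3)-2)*1 + 2*1 + 1 = 2*n+7 := by omega
  have e6 : n+3-1 = n+2 := by omega
  have e7 : n+2-2*0 = n+2 := by omega
  have e8 : n+2-2*1 = n := by omega
  rw [e1, e2, e3, e4, e5, e6, e7, e8]
  have hf1 : ((Nat.factorial (3*n+8) : ℕ) : ℚ) = (3*(n:ℚ)+8) * Nat.factorial (3*n+7) := by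
    rw [show 3*n+8 = (3*n+7)+1 by omega, Nat.factorial_succ]; push_cast; ring
  have hf2 : ((Nat.factorial (2*n+7) : ℕ) : ℚ)
      = (2*(n:ℚ)+7) * (2*(n:ℚ)+6) * Nat.factorial (2*n+5) := by
    rw [show 2*n+7 = (2*n+6)+1 by omega, Nat.factorial_succ,
        show 2*n+6 = (2*n+5)+1 by omega, Nat.factorial_succ]; push_cast; ring
  have hf3 : ((Nat.factorial (n+2) : ℕ) : ℚ) = ((n:ℚ)+2) * ((n:ℚ)+1) * Nat.factorial n := by
    rw [show n+2 = (n+1)+1 by omega, Nat.factorial_succ, Nat.factorial_succ]; push_cast; ring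
  rw [hf1, hf2, hf3]
  simp only [Nat.descFactorial, Nat.factorial]
  push_cast
  field_simp [fac_cast_ne]
  ring

lemma Palpha2_one (a : ℕ) (ha : 1 ≤ a) : Palpha2 a 1 = -(a : ℚ)/2 := by
  match a, ha with
  | 1, _ => norm_num [Palpha2, Nat.factorial, Finset.sum_range_succ, Nat.descFactorial]
  | (n+2), _ =>
  unfold Palpha2
  rw [sum_two _ (fun i hi => by
      simp [Nat.descFactorial_eq_zero_iff_lt.mpr (show 1 < i by omega)]) _
      (by omega : 1 ≤ (n+2)/2)]
  have e1 : 2*(n+2)*1 = 2*n+4 := by ring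
  have e2 : 2*n+4 - 1 + (n+2) = 3*n+5 := by omega
  have e3 : (2*(n+2)-2)*1 + (n+2) = 3*n+4 := by omega
  have e4 : (2*(n+2)-2)*1 + 2*0 = 2*n+2 := by omega
  have e5 : (2*(n+2)-2)*1 + 2*1 = 2*n+4 := by omega
  have e7 : n+2-2*0 = n+2 := by omega
  have e8 : n+2-2*1 = n := by omega
  rw [e1, e2, e3, e4, e5, e7, e8]
  have hf1 : ((Nat.factorial (3*n+5) : ℕ) : ℚ) = (3*(n:ℚ)+5) * Nat.factorial (3*n+4) := by
    rw [show 3*n+5 = (3*n+4)+1 by omega, Nat.factorial_succ]; push_cast; ring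
  have hf2 : ((Nat.factorial (2*n+4) : ℕ) : ℚ)
      = (2*(n:ℚ)+4) * (2*(n:ℚ)+3) * Nat.factorial (2*n+2) := by
    rw [show 2*n+4 = (2*n+3)+1 by omega, Nat.factorial_succ,
        show 2*n+3 = (2*n+2)+1 by omega, Nat.factorial_succ]; push_cast; ring
  have hf3 : ((Nat.factorial (n+2) : ℕ) : ℚ) = ((n:ℚ)+2) * ((n:ℚ)+1) * Nat.factorial n := by
    rw [show n+2 = (n+1)+1 by omega, Nat.factorial_succ, Nat.factorial_succ]; push_cast; ring
  rw [hf1, hf2, hf3]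
  simp only [Nat.descFactorial, Nat.factorial]
  push_cast
  field_simp [fac_cast_ne]
  ring
/-- For `d = 1` and any `a ≥ 1`: `P_c(a,1) = -(a+2)`, `P_{α,2}(a,1) = -a/2`, and
consequently `a·P_c(a,1) - (4·1+2a)·P_{α,2}(a,1) = 0`. -/
theorem d_one_vanishing (a : ℕ) (ha : 1 ≤ a) :
    Pc a 1 = -((a : ℚ) + 2) ∧ Palpha2 a 1 = -(a : ℚ)/2 ∧
      (a : ℚ) * Pc a 1 - (4*1 + 2*(a:ℚ)) * Palpha2 a 1 = 0 := by

  refine ⟨Pc_one a ha, Palpha2_one a ha, ?_⟩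
  rw [Pc_one a ha, Palpha2_one a ha]; ring
end

section
/- For integers g, m, d with g >= 2d and 2g-2-m+d >= 0, the identity 4^d * binom((g-1)/2, d) * ((g/2 + 1 - d)_d / (2g-1-m)_d) = g! * (2g-2-m)! / ((g-2d)! * d! * (2g-2-m+d)!) holds, where binom((g-1)/2, d) is the generalized binomial coefficient and (u)_d is the rising Pochhammer symbol. -/
/-- The rising Pochhammer symbol `(u)_k = u(u+1)⋯(u+k-1)`. -/
def poch (u : ℚ) (k : ℕ) : ℚ := ∏ j ∈ Finset.range k, (u + j)

lemma genChoose_succ (x : ℚ) (d : ℕ) :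
    genChoose x (d+1) = genChoose x d * ((x - d) / (d+1)) := by
  unfold genChoose
  rw [Finset.prod_range_succ, Nat.factorial_succ, div_mul_div_comm]
  push_cast
  ring

lemma poch_succ (u : ℚ) (d : ℕ) : poch u (d+1) = poch u d * (u + d) := by
  unfold poch; rw [Finset.prod_range_succ]

lemma poch_succ' (u : ℚ) (d : ℕ) : poch u (d+1) = u * poch (u+1) d := by
  unfold poch
  rw [Finset.prod_range_succ']
  push_cast
  rw [add_zero, mul_comm]
  congr 1
  apply Finset.prod_congr rfl
  intro j _
  ring

/-- For integers `g, m, d` with `g ≥ 2d`, `2g-2-m+d ≥ 0`, and `2g-1-m+k ≠ 0` for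
`0 ≤ k ≤ d-1`, the identity
`4^d · binom((g-1)/2, d) · ((g/2+1-d)_d / (2g-1-m)_d)`
`= g!(2g-2-m)! / ((g-2d)! d! (2g-2-m+d)!)` holds. -/
theorem pochhammer_factorial_identity (g m : ℤ) (d : ℕ)
    (hg : 2*(d : ℤ) ≤ g) (hm : 0 ≤ 2*g - 2 - m + d)
    (hnz : ∀ k : ℕ, k < d → (2*(g:ℚ) - 1 - (m:ℚ) + k) ≠ 0) :
    (4:ℚ)^d * genChoose (((g:ℚ) - 1)/2) d
        * (poch ((g:ℚ)/2 + 1 - d) d / poch (2*(g:ℚ) - 1 - (m:ℚ)) d)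
      = (Nat.factorial g.toNat : ℚ) * (Nat.factorial (2*g - 2 - m).toNat : ℚ)
          / ((Nat.factorial (g - 2*d).toNat : ℚ) * (Nat.factorial d : ℚ)
              * (Nat.factorial (2*g - 2 - m + d).toNat : ℚ)) := by
  revert hg hm hnz
  induction d with
  | zero =>
    intro hg hm hnz
    have h1 : (Nat.factorial g.toNat : ℚ) ≠ 0 := Nat.cast_ne_zero.mpr (Nat.factorial_ne_zero _)
    have h2 : (Nat.factorial (2*g - 2 - m).toNat : ℚ) ≠ 0 :=
      Nat.cast_ne_zero.mpr (Nat.factorial_ne_zero _)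
    simp [genChoose, poch]
    field_simp
  | succ n ih =>
    intro hg hm hnz
    -- basic integer facts
    have hg' : 2*(n : ℤ) ≤ g := by push_cast at hg ⊢; omega
    have hQden : (2*(g:ℚ) - 1 - (m:ℚ) + n) ≠ 0 := hnz n (lt_add_one n)
    have hQdenZ : (2*g - 1 - m + (n:ℤ)) ≠ 0 := by
      intro h
      apply hQden
      have : ((2*g - 1 - m + (n:ℤ) : ℤ) : ℚ) = 0 := by rw [h]; norm_num
      push_cast at this
      linarith
    have hm' : (0:ℤ) ≤ 2*g - 2 - m + n := by push_cast at hm; omega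
    have ihe := ih hg' hm' (fun k hk => hnz k (by omega))
    -- nonzeroness
    have hP2 : poch (2*(g:ℚ) - 1 - (m:ℚ)) n ≠ 0 := by
      unfold poch
      rw [Finset.prod_ne_zero_iff]
      intro j hj
      exact hnz j (by simp at hj; omega)
    have hn1 : ((n:ℚ) + 1) ≠ 0 := by positivity
    have hG2n : ((g:ℚ) - 2*n) ≠ 0 := by
      have h0 : (2:ℤ)*n + 2 ≤ g := by push_cast at hg; omega
      have h2 : (2:ℚ)*n + 2 ≤ (g:ℚ) := by exact_mod_cast h0
      intro h; linarith
    have hG2n1 : ((g:ℚ) - 2*n - 1) ≠ 0 := by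
      have h0 : (2:ℤ)*n + 2 ≤ g := by push_cast at hg; omega
      have h2 : (2:ℚ)*n + 2 ≤ (g:ℚ) := by exact_mod_cast h0
      intro h; linarith
    have hFa : (Nat.factorial (g - 2*((n:ℤ)+1)).toNat : ℚ) ≠ 0 :=
      Nat.cast_ne_zero.mpr (Nat.factorial_ne_zero _)
    have hFb : (Nat.factorial (2*g - 2 - m + (n:ℤ)).toNat : ℚ) ≠ 0 :=
      Nat.cast_ne_zero.mpr (Nat.factorial_ne_zero _)
    have hFn : ((Nat.factorial n : ℚ)) ≠ 0 := Nat.cast_ne_zero.mpr (Nat.factorial_ne_zero n)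
    -- factorial recursions
    have ea : (Nat.factorial (g - 2*(n:ℤ)).toNat : ℚ)
        = ((g:ℚ) - 2*n) * ((g:ℚ) - 2*n - 1)
            * (Nat.factorial (g - 2*((n:ℤ)+1)).toNat : ℚ) := by
      have ht : (g - 2*(n:ℤ)).toNat = (g - 2*((n:ℤ)+1)).toNat + 1 + 1 := by
        push_cast at hg; omega
      have hc2 : (((g - 2*((n:ℤ)+1)).toNat : ℤ) : ℚ) = (g:ℚ) - 2*n - 2 := by
        have h3 : ((g - 2*((n:ℤ)+1)).toNat : ℤ) = g - 2*((n:ℤ)+1) := by push_cast at hg; omega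
        rw [h3]; push_cast; ring
      rw [ht, Nat.factorial_succ, Nat.factorial_succ]
      push_cast
      push_cast at hc2
      rw [hc2]
      ring
    have eb : (Nat.factorial (2*g - 2 - m + ((n:ℤ)+1)).toNat : ℚ)
        = (2*(g:ℚ) - 1 - (m:ℚ) + n) * (Nat.factorial (2*g - 2 - m + (n:ℤ)).toNat : ℚ) := by
      have ht : (2*g - 2 - m + ((n:ℤ)+1)).toNat = (2*g - 2 - m + (n:ℤ)).toNat + 1 := by omega
      have hc2 : (((2*g - 2 - m + (n:ℤ)).toNat : ℤ) : ℚ) = 2*(g:ℚ) - 2 - (m:ℚ) + n := by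
        have h3 : ((2*g - 2 - m + (n:ℤ)).toNat : ℤ) = 2*g - 2 - m + (n:ℤ) := by omega
        rw [h3]; push_cast; ring
      rw [ht, Nat.factorial_succ]
      push_cast
      push_cast at hc2
      rw [hc2]
      ring
    -- normalize casts in the goal
    push_cast
    -- rewrite the (n+1)-objects
    have e2 : poch ((g:ℚ)/2 + 1 - ((n:ℚ)+1)) (n+1)
        = ((g:ℚ)/2 - n) * poch ((g:ℚ)/2 + 1 - n) n := by
      have h1 : (g:ℚ)/2 + 1 - ((n:ℚ)+1) = (g:ℚ)/2 - n := by ring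
      rw [h1, poch_succ']
      congr 1
      ring
    have h1 : (4:ℚ)^(n+1) * genChoose (((g:ℚ) - 1)/2) (n+1)
        * (poch ((g:ℚ)/2 + 1 - ((n:ℚ)+1)) (n+1) / poch (2*(g:ℚ) - 1 - (m:ℚ)) (n+1))
        = (4:ℚ)^n * genChoose (((g:ℚ) - 1)/2) n
            * (poch ((g:ℚ)/2 + 1 - (n:ℚ)) n / poch (2*(g:ℚ) - 1 - (m:ℚ)) n)
          * (((g:ℚ) - 2*n) * ((g:ℚ) - 2*n - 1)
              / (((n:ℚ)+1) * (2*(g:ℚ) - 1 - (m:ℚ) + n))) := by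
      rw [genChoose_succ, e2, poch_succ, pow_succ]
      field_simp
      ring
    have h2 : (Nat.factorial g.toNat : ℚ) * (Nat.factorial (2*g - 2 - m).toNat : ℚ)
          / ((Nat.factorial (g - 2*((n:ℤ)+1)).toNat : ℚ) * (Nat.factorial (n+1) : ℚ)
              * (Nat.factorial (2*g - 2 - m + ((n:ℤ)+1)).toNat : ℚ))
        = (Nat.factorial g.toNat : ℚ) * (Nat.factorial (2*g - 2 - m).toNat : ℚ)
          / ((Nat.factorial (g - 2*(n:ℤ)).toNat : ℚ) * (Nat.factorial n : ℚ)
              * (Nat.factorial (2*g - 2 - m + (n:ℤ)).toNat : ℚ))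
          * (((g:ℚ) - 2*n) * ((g:ℚ) - 2*n - 1)
              / (((n:ℚ)+1) * (2*(g:ℚ) - 1 - (m:ℚ) + n))) := by
      rw [eb, ea, Nat.factorial_succ]
      push_cast
      rw [div_mul_div_comm, div_eq_div_iff (mul_ne_zero (mul_ne_zero hFa (mul_ne_zero hn1 hFn)) (mul_ne_zero hQden hFb)) (mul_ne_zero (mul_ne_zero (mul_ne_zero (mul_ne_zero (mul_ne_zero hG2n hG2n1) hFa) hFn) hFb) (mul_ne_zero hn1 hQden))]
      ring
    rw [h1, h2, ihe]
end

section
/- Let phi(i_1,...,i_{d-1}) be the number of permutations of the multiset {i_1,...,i_{d-1}} (of nonnegative integers summing to d-1) satisfying the ballot constraint that every initial segment of the permuted sequence (j_1,...,j_{d-1}) has j_1+...+j_t <= t for all t. If the nonzero entries among (i_1,...,i_{d-1}) form the partition (lambda_1^{e_1},...,lambda_l^{e_l}) of d-1 with k = e_1+...+e_l parts, then phi = (d-1)!/((d-k)! * e_1! * ... * e_l!). -/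
open Finset

namespace CountBallotAux

/-- The finset of all distinct lists whose underlying multiset is `M`. -/
noncomputable def perms (M : Multiset ℕ) : Finset (List ℕ) := M.toList.permutations.toFinset

lemma mem_perms {M : Multiset ℕ} {j : List ℕ} : j ∈ perms M ↔ (j : Multiset ℕ) = M := by
  rw [perms, List.mem_toFinset, List.mem_permutations, ← Multiset.coe_eq_coe, M.coe_toList]

lemma perms_eq_biUnion (M : Multiset ℕ) (h : M ≠ 0) :
    perms M = M.toFinset.biUnion (fun a => (perms (M.erase a)).image (a :: ·)) := by
  ext j
  simp only [mem_perms, mem_biUnion, mem_image, Multiset.mem_toFinset]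
  constructor
  · intro hj
    cases j with
    | nil => exact absurd hj.symm (by simpa using h)
    | cons b x =>
      have hb : b ∈ M := by rw [← hj]; simp
      refine ⟨b, hb, x, ?_, rfl⟩
      have : (b ::ₘ (x : Multiset ℕ)).erase b = M.erase b := by
        rw [show (b ::ₘ (x : Multiset ℕ)) = M from hj]
      simpa using this
  · rintro ⟨a, ha, x, hx, rfl⟩
    show a ::ₘ (x : Multiset ℕ) = M
    rw [hx, Multiset.cons_erase ha]

lemma card_perms_eq_sum (M : Multiset ℕ) (h : M ≠ 0) :
    (perms M).card = ∑ a ∈ M.toFinset, (perms (M.erase a)).card := by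
  rw [perms_eq_biUnion M h, card_biUnion]
  · refine Finset.sum_congr rfl fun a _ => ?_
    exact Finset.card_image_of_injective _ (List.cons_injective)
  · intro a _ b _ hab
    rw [Function.onFun, Finset.disjoint_left]
    rintro j hj hj'
    simp only [mem_image] at hj hj'
    obtain ⟨x, _, rfl⟩ := hj
    obtain ⟨y, _, h2⟩ := hj'
    exact hab (List.head_eq_of_cons_eq h2.symm)

lemma prod_count_cons (a : ℕ) (s : Multiset ℕ) :
    ∏ b ∈ (a ::ₘ s).toFinset, ((a ::ₘ s).count b).factorial
      = (s.count a + 1) * ∏ b ∈ s.toFinset, (s.count b).factorial := by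
  by_cases h : a ∈ s
  · have hts : (a ::ₘ s).toFinset = s.toFinset := by
      rw [Multiset.toFinset_cons, Finset.insert_eq_self.2 (Multiset.mem_toFinset.2 h)]
    have haf : a ∈ s.toFinset := Multiset.mem_toFinset.2 h
    rw [hts, ← Finset.prod_erase_mul _ _ haf, ← Finset.prod_erase_mul _ _ haf]
    have hcong : ∏ b ∈ s.toFinset.erase a, ((a ::ₘ s).count b).factorial
        = ∏ b ∈ s.toFinset.erase a, (s.count b).factorial := by
      refine Finset.prod_congr rfl fun b hb => ?_
      rw [Multiset.count_cons_of_ne (Finset.ne_of_mem_erase hb) ]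
    rw [hcong, Multiset.count_cons_self, Nat.factorial_succ]
    ring
  · have haf : a ∉ s.toFinset := fun hc => h (Multiset.mem_toFinset.1 hc)
    rw [Multiset.toFinset_cons, Finset.prod_insert haf]
    have hcong : ∏ b ∈ s.toFinset, ((a ::ₘ s).count b).factorial
        = ∏ b ∈ s.toFinset, (s.count b).factorial := by
      refine Finset.prod_congr rfl fun b hb => ?_
      rw [Multiset.count_cons_of_ne (fun hba => haf (by rwa [← hba]))]
    rw [hcong, Multiset.count_cons_self, Multiset.count_eq_zero_of_notMem h]
    simp [Nat.factorial]

lemma prod_count_erase (M : Multiset ℕ) {a : ℕ} (ha : a ∈ M) :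
    ∏ b ∈ M.toFinset, (M.count b).factorial
      = M.count a * ∏ b ∈ (M.erase a).toFinset, ((M.erase a).count b).factorial := by
  conv_lhs => rw [← Multiset.cons_erase ha]
  rw [prod_count_cons a (M.erase a)]
  congr 1
  rw [Multiset.count_erase_self, Nat.sub_add_cancel (Multiset.one_le_count_iff_mem.2 ha)]

/-- The number of distinct permutations of a multiset times the product of factorials of
multiplicities equals the factorial of its cardinality. -/
lemma card_perms_mul (M : Multiset ℕ) :
    (perms M).card * ∏ b ∈ M.toFinset, (M.count b).factorial
      = (Multiset.card M).factorial := by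
  induction M using Multiset.strongInductionOn with
  | ih M ih =>
    by_cases h : M = 0
    · subst h
      have : perms (0 : Multiset ℕ) = {[]} := by
        ext j; rw [mem_perms]; simp [Multiset.coe_eq_zero]
      simp [this]
    · have hpos : 0 < Multiset.card M := Multiset.card_pos.2 h
      rw [card_perms_eq_sum M h, Finset.sum_mul]
      have hstep : ∀ a ∈ M.toFinset,
          (perms (M.erase a)).card * ∏ b ∈ M.toFinset, (M.count b).factorial
            = M.count a * (Multiset.card M - 1).factorial := by
        intro a haf
        have haM : a ∈ M := Multiset.mem_toFinset.1 haf
        rw [prod_count_erase M haM, ← mul_assoc, mul_comm ((perms (M.erase a)).card) (M.count a),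
          mul_assoc, ih (M.erase a) (Multiset.erase_lt.2 haM),
          Multiset.card_erase_of_mem haM, Nat.pred_eq_sub_one]
      rw [Finset.sum_congr rfl hstep, ← Finset.sum_mul, Multiset.toFinset_sum_count_eq]
      exact Nat.mul_factorial_pred hpos.ne'

/-- Prefix sums of the periodic extension of `m` (period `d`, total per period `d-1`). -/
def Shat (m : List ℕ) (d t : ℕ) : ℕ := (m.take (t % d)).sum + (t / d) * (d - 1)

/-- The "height" function of the cycle lemma. -/
def Af (m : List ℕ) (d t : ℕ) : ℤ := (Shat m d t : ℤ) - t

lemma Shat_eq {m : List ℕ} {d : ℕ} (hd : 0 < d) (hlen : m.length = d) (hsum : m.sum = d - 1)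
    {t : ℕ} (ht : t ≤ d) : Shat m d t = (m.take t).sum := by
  rcases lt_or_eq_of_le ht with h | rfl
  · rw [Shat, Nat.mod_eq_of_lt h, Nat.div_eq_of_lt h, zero_mul, add_zero]
  · rw [Shat, Nat.mod_self, Nat.div_self hd, one_mul, List.take_zero, List.sum_nil,
      List.take_of_length_le (le_of_eq hlen), hsum, zero_add]

lemma Af_add {m : List ℕ} {d : ℕ} (hd : 0 < d) (t : ℕ) : Af m d (t + d) = Af m d t - 1 := by
  have h1 : Shat m d (t + d) = Shat m d t + (d - 1) := by
    rw [Shat, Shat, Nat.add_mod_right, Nat.add_div_right _ hd, add_mul, one_mul, add_assoc]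
  rw [Af, Af, h1]
  push_cast
  omega

lemma rotate_take_sum {m : List ℕ} {d : ℕ} (hd : 0 < d) (hlen : m.length = d)
    (hsum : m.sum = d - 1) {r s : ℕ} (hr : r < d) (hs : s ≤ d) :
    (m.take r).sum + ((m.rotate r).take s).sum = Shat m d (r + s) := by
  have hrl : r ≤ m.length := by omega
  rw [List.rotate_eq_drop_append_take hrl, List.take_append]
  have hdl : (m.drop r).length = d - r := by rw [List.length_drop, hlen]
  rw [List.sum_append, hdl]
  by_cases hcase : r + s ≤ d
  · have h2 : s - (d - r) = 0 := by omega
    rw [h2, List.take_zero, List.sum_nil, add_zero]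
    have h4 : (m.take (r + s)).drop r = (m.drop r).take s := by
      rw [List.drop_take]; congr 1; omega
    have h3 : (m.take (r + s)).take r = m.take r := by
      rw [List.take_take]; congr 1; omega
    have h5 := (m.take (r + s)).sum_take_add_sum_drop r
    rw [h3, h4] at h5
    rw [h5, Shat_eq hd hlen hsum hcase]
  · have h2 : (m.drop r).take s = m.drop r := by
      apply List.take_of_length_le; omega
    have h3 : (m.take r).take (s - (d - r)) = m.take (r + s - d) := by
      rw [List.take_take]; congr 1; omega
    rw [h2, h3]
    have h5 := m.sum_take_add_sum_drop r
    have h6 : Shat m d (r + s) = (m.take (r + s - d)).sum + (d - 1) := by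
      obtain ⟨u, hu⟩ : ∃ u, r + s = u + d := ⟨r + s - d, by omega⟩
      rw [hu, Shat, Nat.add_mod_right, Nat.add_div_right _ hd,
        Nat.mod_eq_of_lt (show u < d by omega), Nat.div_eq_of_lt (show u < d by omega),
        show u + d - d = u by omega]
      ring
    rw [h6]
    omega

/-- Rotation `r` is "good" iff the height function stays below its value at `r`. -/
lemma good_rotate_iff {m : List ℕ} {d : ℕ} (hd : 0 < d) (hlen : m.length = d)
    (hsum : m.sum = d - 1) {r : ℕ} (hr : r < d) :
    (∀ s, 1 ≤ s → s ≤ d → ((m.rotate r).take s).sum < s) ↔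
      (∀ s, 1 ≤ s → s ≤ d → Af m d (r + s) < Af m d r) := by
  have hAr : Af m d r = ((m.take r).sum : ℤ) - r := by
    rw [Af, Shat_eq hd hlen hsum (le_of_lt hr)]
  constructor <;> intro H s h1 h2 <;>
    · have h3 := rotate_take_sum hd hlen hsum hr h2
      have h4 := H s h1 h2
      simp only [Af] at h4 hAr ⊢
      omega

lemma good_exists_unique {m : List ℕ} {d : ℕ} (hd : 0 < d) (hlen : m.length = d)
    (hsum : m.sum = d - 1) :
    ∃ r < d, (∀ s, 1 ≤ s → s ≤ d → ((m.rotate r).take s).sum < s) ∧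
      ∀ r' < d, (∀ s, 1 ≤ s → s ≤ d → ((m.rotate r').take s).sum < s) → r' = r := by
  obtain ⟨r, hrmem, hrmax⟩ := (Finset.range d).exists_max_image
    (fun t => d * Af m d t + t) ⟨0, Finset.mem_range.2 hd⟩
  rw [Finset.mem_range] at hrmem
  have key1 : ∀ t, t ≤ r → Af m d t ≤ Af m d r := by
    intro t ht
    by_contra hcon
    push_neg at hcon
    have h1 : Af m d r + 1 ≤ Af m d t := hcon
    have h2 : (d : ℤ) * (Af m d r + 1) ≤ d * Af m d t :=
      mul_le_mul_of_nonneg_left h1 (by positivity)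
    have h3 := hrmax t (Finset.mem_range.2 (lt_of_le_of_lt ht hrmem))
    have hrd : (r : ℤ) < d := by exact_mod_cast hrmem
    linarith [h2, h3, hrd]
  have key2 : ∀ t, r < t → t < d → Af m d t < Af m d r := by
    intro t hrt htd
    by_contra hcon
    push_neg at hcon
    have h2 : (d : ℤ) * Af m d r ≤ d * Af m d t :=
      mul_le_mul_of_nonneg_left hcon (by positivity)
    have h3 := hrmax t (Finset.mem_range.2 htd)
    have : (r : ℤ) < t := by exact_mod_cast hrt
    linarith
  have hgoodA : ∀ s, 1 ≤ s → s ≤ d → Af m d (r + s) < Af m d r := by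
    intro s h1 h2
    by_cases hc : r + s < d
    · exact key2 _ (by omega) hc
    · rw [show r + s = (r + s - d) + d by omega, Af_add hd]
      have := key1 (r + s - d) (by omega)
      omega
  have hgood := (good_rotate_iff hd hlen hsum hrmem).2 hgoodA
  refine ⟨r, hrmem, hgood, ?_⟩
  intro r' hr' hgood'
  have hgoodA' := (good_rotate_iff hd hlen hsum hr').1 hgood'
  by_contra hne
  have claim : ∀ a b, a < b → b < d →
      (∀ s, 1 ≤ s → s ≤ d → Af m d (a + s) < Af m d a) →
      (∀ s, 1 ≤ s → s ≤ d → Af m d (b + s) < Af m d b) → False := by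
    intro a b hab hbd HA HB
    have h1 : Af m d b < Af m d a := by
      have := HA (b - a) (by omega) (by omega)
      rwa [show a + (b - a) = b by omega] at this
    have h2 : Af m d a - 1 < Af m d b := by
      have := HB (a + d - b) (by omega) (by omega)
      rwa [show b + (a + d - b) = a + d by omega, Af_add hd] at this
    omega
  rcases Nat.lt_trichotomy r' r with h | h | h
  · exact claim r' r h hrmem hgoodA' hgoodA
  · exact hne h
  · exact claim r r' h hr' hgoodA hgoodA'

lemma rotate_back {x : List ℕ} {d r : ℕ} (hd : 0 < d) (hxl : x.length = d) (hr : r < d) :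
    (x.rotate r).rotate (if r = 0 then 0 else d - r) = x := by
  split_ifs with h
  · subst h; simp
  · rw [List.rotate_rotate, show r + (d - r) = d by omega, ← hxl, x.rotate_length]

lemma cycle_count {d : ℕ} (hd : 0 < d) (M : Multiset ℕ) (hcard : Multiset.card M = d)
    (hsumM : M.sum = d - 1) :
    (perms M).card = d * ((perms M).filter
      (fun x => ∀ s ∈ Finset.Icc 1 d, (x.take s).sum < s)).card := by
  set G := (perms M).filter (fun x => ∀ s ∈ Finset.Icc 1 d, (x.take s).sum < s) with hG
  have hlen : ∀ x : List ℕ, (x : Multiset ℕ) = M → x.length = d := by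
    intro x hx
    have : Multiset.card (x : Multiset ℕ) = d := by rw [hx, hcard]
    simpa using this
  have hsum : ∀ x : List ℕ, (x : Multiset ℕ) = M → x.sum = d - 1 := by
    intro x hx
    have : (x : Multiset ℕ).sum = d - 1 := by rw [hx, hsumM]
    simpa using this
  have hcardeq : (Finset.range d ×ˢ G).card = (perms M).card := by
    apply Finset.card_nbij (fun p => p.2.rotate p.1)
    · rintro ⟨r, x⟩ hp
      rw [Finset.mem_coe, Finset.mem_product] at hp
      obtain ⟨hr, hx⟩ := hp
      rw [hG, Finset.mem_filter] at hx
      rw [mem_perms] at hx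
      rw [Finset.mem_coe, mem_perms]
      rw [← hx.1, Multiset.coe_eq_coe]
      exact x.rotate_perm r
    · rintro ⟨r, x⟩ hp ⟨r', y⟩ hq heq
      simp only [Finset.coe_product, Set.mem_prod, Finset.mem_coe, Finset.mem_range, hG,
        Finset.mem_filter, mem_perms] at hp hq
      obtain ⟨hr, hx, hxg⟩ := hp
      obtain ⟨hr', hy, hyg⟩ := hq
      simp only at heq
      set m0 := x.rotate r with hm0
      have hxl : x.length = d := hlen x hx
      have hyl : y.length = d := hlen y hy
      have hm0l : m0.length = d := by rw [hm0, List.length_rotate, hxl]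
      have hm0s : m0.sum = d - 1 := by
        rw [hm0, (x.rotate_perm r).sum_eq, hsum x hx]
      obtain ⟨r0, hr0d, hr0g, hr0u⟩ := good_exists_unique hd hm0l hm0s
      have hbx : m0.rotate (if r = 0 then 0 else d - r) = x := rotate_back hd hxl hr
      have hby : m0.rotate (if r' = 0 then 0 else d - r') = y := by
        rw [heq]; exact rotate_back hd hyl hr'
      have hgx : ∀ s, 1 ≤ s → s ≤ d → ((m0.rotate (if r = 0 then 0 else d - r)).take s).sum < s := by
        intro s h1 h2
        rw [hbx]
        exact hxg s (Finset.mem_Icc.2 ⟨h1, h2⟩)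
      have hgy : ∀ s, 1 ≤ s → s ≤ d → ((m0.rotate (if r' = 0 then 0 else d - r')).take s).sum < s := by
        intro s h1 h2
        rw [hby]
        exact hyg s (Finset.mem_Icc.2 ⟨h1, h2⟩)
      have e1 := hr0u _ (by split_ifs <;> omega) hgx
      have e2 := hr0u _ (by split_ifs <;> omega) hgy
      have hrr : r = r' := by
        rw [← e2] at e1
        split_ifs at e1 <;> omega
      subst hrr
      have hxy : x = y := by
        rw [← hbx, ← hby]
      simp [hxy]
    · intro m hm
      rw [Finset.mem_coe, mem_perms] at hm
      have hml : m.length = d := hlen m hm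
      have hms : m.sum = d - 1 := hsum m hm
      obtain ⟨r0, hr0d, hr0g, _⟩ := good_exists_unique hd hml hms
      refine ⟨⟨if r0 = 0 then 0 else d - r0, m.rotate r0⟩, ?_, ?_⟩
      · rw [Finset.mem_coe, Finset.mem_product]
        constructor
        · rw [Finset.mem_range]; split_ifs <;> omega
        · rw [hG, Finset.mem_filter]
          constructor
          · rw [mem_perms, ← hm, Multiset.coe_eq_coe]
            exact m.rotate_perm r0
          · intro s hs
            rw [Finset.mem_Icc] at hs
            exact hr0g s hs.1 hs.2
      · exact rotate_back hd hml hr0d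
  rw [← hcardeq, Finset.card_product, Finset.card_range]

end CountBallotAux

/-- Let `d ≥ 2` and let `L` be a sequence of `d-1` nonnegative integers summing to
`d-1`, whose nonzero entries form the partition `(λ₁^{e₁}, …, λ_l^{e_l})` of `d-1`
(distinct values `λ₁ > ⋯ > λ_l > 0` with multiplicities `e₁, …, e_l`, and
`k = e₁ + ⋯ + e_l` parts).  Then the number `φ` of distinct rearrangements
`(j₁, …, j_{d-1})` of `L` satisfying the ballot constraint
`j₁ + ⋯ + j_t ≤ t` for all `t` equals `(d-1)!/((d-k)!·e₁!⋯e_l!)`. -/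
theorem count_ballot_rearrangements (d : ℕ) (hd : 2 ≤ d)
    (L : List ℕ) (hlen : L.length = d - 1) (hsum : L.sum = d - 1)
    (l : ℕ) (lam e : Fin l → ℕ)
    (hlam_pos : ∀ i, 0 < lam i) (he_pos : ∀ i, 0 < e i)
    (hlam_anti : ∀ i j : Fin l, i < j → lam j < lam i)
    (k : ℕ) (hk : k = ∑ i, e i) (hkd : k ≤ d - 1)
    (hL : (L : Multiset ℕ)
        = (∑ i, Multiset.replicate (e i) (lam i)) + Multiset.replicate (d - 1 - k) 0) :
    ((L.permutations.toFinset.filter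
        (fun j : List ℕ => ∀ t ∈ Finset.range d, (j.take t).sum ≤ t)).card : ℚ)
      = (Nat.factorial (d - 1) : ℚ)
          / ((Nat.factorial (d - k) : ℚ) * ∏ i, (Nat.factorial (e i) : ℚ)) := by
  classical
  have hd0 : 0 < d := by omega
  set M0 : Multiset ℕ := 0 ::ₘ (L : Multiset ℕ) with hM0def
  have hcard : Multiset.card M0 = d := by
    rw [hM0def, Multiset.card_cons]
    simp only [Multiset.coe_card, hlen]
    omega
  have hsumM : M0.sum = d - 1 := by
    rw [hM0def, Multiset.sum_cons, Multiset.sum_coe, hsum, zero_add]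
  set T := L.permutations.toFinset.filter
      (fun j : List ℕ => ∀ t ∈ Finset.range d, (j.take t).sum ≤ t) with hT
  set G := (CountBallotAux.perms M0).filter
      (fun x => ∀ s ∈ Finset.Icc 1 d, (x.take s).sum < s) with hGdef
  have hGT : G = T.image (0 :: ·) := by
    ext x
    simp only [hGdef, hT, Finset.mem_filter, Finset.mem_image, CountBallotAux.mem_perms,
      List.mem_toFinset, List.mem_permutations]
    constructor
    · rintro ⟨hx, hgood⟩
      cases x with
      | nil =>
        rw [hM0def] at hx
        exact (Multiset.cons_ne_zero (hx.symm.trans (by simp))).elim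
      | cons a j =>
        have h1 := hgood 1 (Finset.mem_Icc.2 ⟨le_refl 1, by omega⟩)
        have ha : a = 0 := by simpa using h1
        subst ha
        have hj : (j : Multiset ℕ) = (L : Multiset ℕ) := by
          rw [hM0def, Multiset.cons_coe] at hx
          exact (Multiset.cons_inj_right 0).1 hx
        refine ⟨j, ⟨Multiset.coe_eq_coe.1 hj, fun t ht => ?_⟩, rfl⟩
        rw [Finset.mem_range] at ht
        have h2 := hgood (t + 1) (Finset.mem_Icc.2 ⟨by omega, by omega⟩)
        rw [List.take_succ_cons] at h2
        simp only [List.sum_cons, zero_add] at h2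
        omega
    · rintro ⟨j, ⟨hperm, hcond⟩, rfl⟩
      constructor
      · rw [hM0def]
        have hje : (j : Multiset ℕ) = ↑L := Multiset.coe_eq_coe.2 hperm
        rw [← hje]
        exact Multiset.cons_coe 0 j
      · intro s hs
        rw [Finset.mem_Icc] at hs
        obtain ⟨u, rfl⟩ : ∃ u, s = u + 1 := ⟨s - 1, by omega⟩
        rw [List.take_succ_cons]
        have := hcond u (Finset.mem_range.2 (by omega))
        simp only [List.sum_cons, zero_add]
        omega
  have hTG : G.card = T.card := by
    rw [hGT]
    exact Finset.card_image_of_injective _ List.cons_injective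
  have h2 := CountBallotAux.cycle_count hd0 M0 hcard hsumM
  have h1 := CountBallotAux.card_perms_mul M0
  rw [hcard] at h1
  have hlam_inj : Function.Injective lam := by
    intro i j hij
    rcases lt_trichotomy i j with h | h | h
    · exact absurd hij (hlam_anti i j h).ne'
    · exact h
    · exact absurd hij (hlam_anti j i h).ne
  have hM0eq : M0 = (∑ i, Multiset.replicate (e i) (lam i))
      + Multiset.replicate (d - k) 0 := by
    rw [hM0def, hL, show d - k = (d - 1 - k) + 1 by omega, Multiset.replicate_succ,
      Multiset.add_cons]
  have hc0 : M0.count 0 = d - k := by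
    rw [hM0eq, Multiset.count_add, Multiset.count_sum', Finset.sum_eq_zero, zero_add,
      Multiset.count_replicate_self]
    intro i _
    rw [Multiset.count_replicate, if_neg (hlam_pos i).ne']
  have hci : ∀ i, M0.count (lam i) = e i := by
    intro i
    rw [hM0eq, Multiset.count_add, Multiset.count_sum',
      Multiset.count_replicate, if_neg (hlam_pos i).ne, add_zero,
      Finset.sum_eq_single i (fun j _ hj => ?_) (fun h => absurd (Finset.mem_univ i) h)]
    · rw [Multiset.count_replicate, if_pos rfl]
    · rw [Multiset.count_replicate, if_neg (fun h => hj (hlam_inj h))]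
  have htf : M0.toFinset = insert 0 (Finset.image lam Finset.univ) := by
    ext b
    simp only [Multiset.mem_toFinset, Finset.mem_insert, Finset.mem_image, Finset.mem_univ,
      true_and]
    rw [hM0eq, Multiset.mem_add, Multiset.mem_sum]
    constructor
    · rintro (⟨i, _, hb⟩ | hb)
      · exact Or.inr ⟨i, (Multiset.eq_of_mem_replicate hb).symm⟩
      · exact Or.inl (Multiset.eq_of_mem_replicate hb)
    · rintro (rfl | ⟨i, rfl⟩)
      · exact Or.inr (Multiset.mem_replicate.2 ⟨by omega, rfl⟩)
      · exact Or.inl ⟨i, Finset.mem_univ i, Multiset.mem_replicate.2 ⟨(he_pos i).ne', rfl⟩⟩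
  have hF : ∏ b ∈ M0.toFinset, (M0.count b).factorial
      = (d - k).factorial * ∏ i, (e i).factorial := by
    rw [htf, Finset.prod_insert (by
      simp only [Finset.mem_image, Finset.mem_univ, true_and, not_exists]
      exact fun i => (hlam_pos i).ne'), hc0]
    congr 1
    rw [Finset.prod_image (fun i _ j _ h => hlam_inj h)]
    exact Finset.prod_congr rfl fun i _ => by rw [hci i]
  have hnat : T.card * ((d - k).factorial * ∏ i, (e i).factorial)
      = (d - 1).factorial := by
    apply Nat.eq_of_mul_eq_mul_left hd0
    have hdfac : d.factorial = d * (d - 1).factorial := by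
      conv_lhs => rw [show d = (d - 1) + 1 by omega]
      rw [Nat.factorial_succ, show d - 1 + 1 = d by omega]
    calc d * (T.card * ((d - k).factorial * ∏ i, (e i).factorial))
        = (d * G.card) * ∏ b ∈ M0.toFinset, (M0.count b).factorial := by
          rw [hTG, hF]; ring
      _ = (CountBallotAux.perms M0).card * ∏ b ∈ M0.toFinset, (M0.count b).factorial := by
          rw [← h2]
      _ = d.factorial := h1
      _ = d * (d - 1).factorial := hdfac
  have hne : ((Nat.factorial (d - k) : ℚ) * ∏ i, (Nat.factorial (e i) : ℚ)) ≠ 0 := by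
    apply mul_ne_zero
    · exact_mod_cast (Nat.factorial_pos _).ne'
    · refine Finset.prod_ne_zero_iff.2 fun i _ => ?_
      exact_mod_cast (Nat.factorial_pos _).ne'
  rw [eq_div_iff hne]
  exact_mod_cast hnat
end
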